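/- Let (𝒞,J) be a small site, c an object of 𝒞, 𝒟 a small category and F : 𝒟 ⥤ Over c a functor to the slice category of 𝒞 over c. Consider the cocone with vertex l_J(c) over the functor 𝒟 ⥤ Sheaf J sending d to l_J((F d).left), whose leg at d is l_J((F d).hom). This cocone is a colimit cocone if and only if: (1) the sieve on c generated by the morphisms (F d).hom for d ranging over the objects of 𝒟 is J-covering; and (2) whenever d₁, d₂ are objects of 𝒟, c' an object of 𝒞, and x : c' ⟶ (F d₁).left, x' : c' ⟶ (F d₂).left satisfy (F d₁).hom ∘ x = (F d₂).hom ∘ x', there is a family of morphisms (x_k : c'_k ⟶ c') generating a J-covering sieve on c' such that for each k, the objects (d₁, x ∘ x_k) and (d₂, x' ∘ x_k) lie in the same connected component of the comma category of c'_k under the composite functor 𝒟 ⥤ Over c ⥤ 𝒞 (i.e., the category whose objects are pairs (d, v : c'_k ⟶ (F d).left) and whose morphisms (d,v) ⟶ (d̄,v̄) are morphisms w : d ⟶ d̄ of 𝒟 with (F w).left ∘ v = v̄). -/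

import Mathlib

open CategoryTheory Limits

universe u

variable {C : Type u} [SmallCategory C] {D : Type u} [SmallCategory D]

/-- `l_J : 𝒞 ⥤ Sheaf J`, the Yoneda embedding followed by sheafification. -/
noncomputable def lSh (J : GrothendieckTopology C) : C ⥤ Sheaf J (Type u) :=
  yoneda ⋙ presheafToSheaf J (Type u)

/-- The diagram `𝒟 ⥤ Sheaf J` sending `d` to `l_J((F d).left)`. -/
noncomputable def overDiagram (J : GrothendieckTopology C) {c : C} (F : D ⥤ Over c) :
    D ⥤ Sheaf J (Type u) where
  obj d := (lSh J).obj ((F.obj d).left)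
  map w := (lSh J).map ((F.map w).left)
  map_id := by intros; simp
  map_comp := by intros; simp

/-- The cocone with vertex `l_J(c)` whose leg at `d` is `l_J((F d).hom)`. -/
noncomputable def overCocone (J : GrothendieckTopology C) {c : C} (F : D ⥤ Over c) :
    Cocone (overDiagram J F) where
  pt := (lSh J).obj c
  ι :=
    { app := fun d => (lSh J).map ((F.obj d).hom)
      naturality := by
        intro d₁ d₂ w
        show (lSh J).map ((F.map w).left) ≫ (lSh J).map ((F.obj d₂).hom) = _
        rw [← Functor.map_comp, Over.w (F.map w)]
        simp [overDiagram] }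


namespace OverColimAux

variable {C : Type u} [SmallCategory C] {D : Type u} [SmallCategory D]
variable {c : C} (F : D ⥤ Over c)

/-- Index of generalized elements of the colimit presheaf. -/
abbrev Idx (c' : C) : Type u := Σ d : D, c' ⟶ (F.obj d).left

/-- The one-step relation defining the colimit presheaf. -/
def rel (c' : C) : Idx F c' → Idx F c' → Prop :=
  fun p q => ∃ w : p.1 ⟶ q.1, p.2 ≫ (F.map w).left = q.2

/-- The colimit presheaf, described explicitly as a quotient. -/
def P : Cᵒᵖ ⥤ Type u where
  obj c' := Quot (rel F c'.unop)
  map g := ↾(Quot.map (fun (p : Idx F _) => (⟨p.1, g.unop ≫ p.2⟩ : Idx F _))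
    (by rintro p q ⟨w, hw⟩; exact ⟨w, by rw [Category.assoc, hw]⟩))
  map_id c' := by
    ext a
    induction a using Quot.ind with
    | _ p => show Quot.mk _ _ = Quot.mk _ _; simp
  map_comp g h := by
    ext a
    induction a using Quot.ind with
    | _ p => show Quot.mk _ _ = Quot.mk _ _; simp

/-- The canonical comparison map `P ⟶ yoneda.obj c`. -/
def toY : P F ⟶ yoneda.obj c where
  app c' := ↾(Quot.lift (fun (p : Idx F c'.unop) => p.2 ≫ (F.obj p.1).hom)
    (by rintro p q ⟨w, hw⟩; rw [← hw, Category.assoc, Over.w (F.map w)]))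
  naturality c' c'' g := by
    ext a
    induction a using Quot.ind with
    | _ p => show (g.unop ≫ p.2) ≫ (F.obj p.1).hom = g.unop ≫ (p.2 ≫ (F.obj p.1).hom); simp

/-- The presheaf-level diagram. -/
abbrev H : D ⥤ Cᵒᵖ ⥤ Type u := F ⋙ Over.forget c ⋙ yoneda

/-- The colimit cocone with vertex `P`. -/
def cp : Cocone (H F) where
  pt := P F
  ι :=
    { app := fun d =>
        { app := fun c' => ↾(fun x => Quot.mk _ (⟨d, x⟩ : Idx F c'.unop))
          naturality := fun c' c'' g => rfl }
      naturality := fun d₁ d₂ w => by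
        ext c' x
        exact (Quot.sound ⟨w, rfl⟩).symm }

/-- `cp` is a colimit cocone. -/
def cpIsColimit : IsColimit (cp F) :=
  evaluationJointlyReflectsColimits _ (fun c' =>
    { desc := fun s => ↾(Quot.lift (fun (p : Idx F c'.unop) => s.ι.app p.1 p.2) (by
        rintro p q ⟨w, hw⟩
        have := types_congr_hom (s.ι.naturality w) p.2
        simp only [Functor.comp_obj, Functor.const_obj_obj, Functor.comp_map,
          types_comp_apply, Functor.const_obj_map, types_id_apply] at this
        dsimp only
        rw [← hw]
        exact this.symm))
      fac := fun s d => rfl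
      uniq := fun s m hm => by
        ext a
        induction a using Quot.ind with
        | _ p => exact types_congr_hom (hm p.1) p.2 })

/-- The cocone with vertex `yoneda.obj c`. -/
def KY : Cocone (H F) where
  pt := yoneda.obj c
  ι :=
    { app := fun d => yoneda.map (F.obj d).hom
      naturality := fun d₁ d₂ w => by
        show yoneda.map ((F.map w).left) ≫ yoneda.map (F.obj d₂).hom = _
        rw [← Functor.map_comp, Over.w (F.map w)]
        simp }

lemma fac_d (d : D) : (cp F).ι.app d ≫ toY F = (KY F).ι.app d := rfl

/-- Sending an index to the corresponding structured arrow. -/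
def toSA {c' : C} (p : Idx F c') : StructuredArrow c' (F ⋙ Over.forget c) :=
  StructuredArrow.mk p.2

lemma mk_eq_iff {c' : C} (p q : Idx F c') :
    Quot.mk (rel F c') p = Quot.mk (rel F c') q ↔ Zigzag (toSA F p) (toSA F q) := by
  constructor
  · intro h
    have h' := Quot.eq.1 h
    clear h
    induction h' with
    | rel a b hab =>
        obtain ⟨w, hw⟩ := hab
        exact Zigzag.of_hom (StructuredArrow.homMk w hw)
    | refl a => exact Zigzag.refl _
    | symm a b _ ih => exact ih.symm
    | trans a b e _ _ ih₁ ih₂ => exact ih₁.trans ih₂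
  · intro h
    have key : ∀ (X Y : StructuredArrow c' (F ⋙ Over.forget c)), Zigzag X Y →
        Quot.mk (rel F c') ⟨X.right, X.hom⟩ = Quot.mk (rel F c') ⟨Y.right, Y.hom⟩ := by
      intro X Y hXY
      induction hXY with
      | refl => rfl
      | tail _ hz ih =>
          refine ih.trans ?_
          rcases hz with ⟨⟨f⟩⟩ | ⟨⟨f⟩⟩
          · exact Quot.sound ⟨f.right, StructuredArrow.w f⟩
          · exact (Quot.sound ⟨f.right, StructuredArrow.w f⟩).symm
    exact key _ _ h

lemma locallySurjective_iff (J : GrothendieckTopology C) :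
    Presheaf.IsLocallySurjective J (toY F) ↔
      Sieve.generate
        (Presieve.ofArrows (fun d : D => (F.obj d).left) (fun d => (F.obj d).hom)) ∈ J c := by
  constructor
  · intro h
    haveI := h
    refine J.superset_covering ?_ (Presheaf.imageSieve_mem J (toY F) (𝟙 c))
    intro Y g hg
    obtain ⟨t, ht⟩ := hg
    induction t using Quot.ind with
    | _ p =>
        refine ⟨_, p.2, (F.obj p.1).hom, Presieve.ofArrows.mk p.1, ?_⟩
        have ht' : p.2 ≫ (F.obj p.1).hom = g ≫ 𝟙 c := ht
        simpa using ht'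
  · intro h
    constructor
    intro U s
    refine J.superset_covering ?_ (J.pullback_stable s h)
    rintro Y g ⟨Z, h', f, hf, hgf⟩
    cases hf with
    | mk d => exact ⟨Quot.mk _ ⟨d, h'⟩, hgf⟩

lemma locallyInjective_iff (J : GrothendieckTopology C) :
    Presheaf.IsLocallyInjective J (toY F) ↔
      ∀ (d₁ d₂ : D) (c' : C) (x : c' ⟶ (F.obj d₁).left) (x' : c' ⟶ (F.obj d₂).left),
        x ≫ (F.obj d₁).hom = x' ≫ (F.obj d₂).hom →
        ∃ (ι : Type u) (ck : ι → C) (xk : ∀ k, ck k ⟶ c'),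
          Sieve.generate (Presieve.ofArrows ck xk) ∈ J c' ∧
          ∀ k, Zigzag
            (StructuredArrow.mk (T := F ⋙ Over.forget c) (Y := d₁) (xk k ≫ x))
            (StructuredArrow.mk (T := F ⋙ Over.forget c) (Y := d₂) (xk k ≫ x')) := by
  constructor
  · intro h d₁ d₂ c' x x' hx
    haveI := h
    have hS : Presheaf.equalizerSieve (F := P F) (X := Opposite.op c')
        (Quot.mk _ ⟨d₁, x⟩) (Quot.mk _ ⟨d₂, x'⟩) ∈ J c' :=
      Presheaf.equalizerSieve_mem J (toY F) _ _ hx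
    refine ⟨Σ Y : C, { g : Y ⟶ c' // (Presheaf.equalizerSieve (F := P F) (X := Opposite.op c')
        (Quot.mk _ ⟨d₁, x⟩) (Quot.mk _ ⟨d₂, x'⟩)).arrows g },
      fun k => k.1, fun k => k.2.1, ?_, ?_⟩
    · refine J.superset_covering ?_ hS
      intro Y g hg
      exact Sieve.le_generate _ _ _ (Presieve.ofArrows.mk (⟨Y, g, hg⟩ : Σ Y : C, { g : Y ⟶ c' // _ }))
    · rintro ⟨Y, g, hg⟩
      exact (mk_eq_iff F _ _).1 hg
  · intro h
    constructor
    intro X a b hab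
    induction a using Quot.ind with
    | _ p =>
      induction b using Quot.ind with
      | _ q =>
        obtain ⟨ι, ck, xk, hcov, hzig⟩ := h p.1 q.1 X.unop p.2 q.2 hab
        refine J.superset_covering ?_ hcov
        rw [Sieve.generate_le_iff]
        rintro Y g ⟨k⟩
        exact (mk_eq_iff F _ _).2 (hzig k)

lemma step1 (J : GrothendieckTopology C) :
    Nonempty (IsColimit (overCocone J F)) ↔
      IsIso ((presheafToSheaf J (Type u)).map (toY F)) := by
  haveI : PreservesColimitsOfSize.{u, u} (presheafToSheaf J (Type u)) :=
    (sheafificationAdjunction J (Type u)).leftAdjoint_preservesColimits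
  have hcp : IsColimit ((presheafToSheaf J (Type u)).mapCocone (cp F)) :=
    isColimitOfPreserves _ (cpIsColimit F)
  have hdesc : hcp.desc ((presheafToSheaf J (Type u)).mapCocone (KY F)) =
      (presheafToSheaf J (Type u)).map (toY F) := by
    refine (hcp.uniq _ _ (fun d => ?_)).symm
    rw [Functor.mapCocone_ι_app, Functor.mapCocone_ι_app]
    exact (Functor.map_comp _ _ _).symm.trans (congrArg _ (fac_d F d))
  have key : Nonempty (IsColimit ((presheafToSheaf J (Type u)).mapCocone (KY F))) ↔
      IsIso ((presheafToSheaf J (Type u)).map (toY F)) := by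
    constructor
    · rintro ⟨hk⟩
      rw [← hdesc]
      exact ⟨hk.desc ((presheafToSheaf J (Type u)).mapCocone (cp F)),
        hcp.hom_ext (fun d => by
          erw [← Category.assoc, hcp.fac, hk.fac]; exact (Category.comp_id _).symm),
        hk.hom_ext (fun d => by
          erw [← Category.assoc, hk.fac, hcp.fac]; exact (Category.comp_id _).symm)⟩
    · intro hiso
      rw [← hdesc] at hiso
      exact ⟨IsColimit.ofPointIso (i := hiso) hcp⟩
  exact key

end OverColimAux

/-- The cocone with vertex `l_J(c)` over the objects `l_J((F d).left)` of a functor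
`F : 𝒟 ⥤ Over c` is a colimit cocone iff (1) the morphisms `(F d).hom` generate a
`J`-covering sieve on `c`, and (2) any two locally-agreeing generalized elements can be
locally connected by a zigzag in the relevant comma categories. -/
theorem overCocone_isColimit_iff (J : GrothendieckTopology C) {c : C} (F : D ⥤ Over c) :
    Nonempty (IsColimit (overCocone J F)) ↔
      ((Sieve.generate
          (Presieve.ofArrows (fun d : D => (F.obj d).left) (fun d => (F.obj d).hom)) ∈
            J c) ∧
        ∀ (d₁ d₂ : D) (c' : C) (x : c' ⟶ (F.obj d₁).left) (x' : c' ⟶ (F.obj d₂).left),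
          x ≫ (F.obj d₁).hom = x' ≫ (F.obj d₂).hom →
          ∃ (ι : Type u) (ck : ι → C) (xk : ∀ k, ck k ⟶ c'),
            Sieve.generate (Presieve.ofArrows ck xk) ∈ J c' ∧
            ∀ k, Zigzag
              (StructuredArrow.mk (T := F ⋙ Over.forget c) (Y := d₁) (xk k ≫ x))
              (StructuredArrow.mk (T := F ⋙ Over.forget c) (Y := d₂) (xk k ≫ x'))) := by
  rw [OverColimAux.step1 F J, ← J.W_iff, J.W_iff_isLocallyBijective,
    OverColimAux.locallySurjective_iff F J, OverColimAux.locallyInjective_iff F J]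
  exact and_comm
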